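/- Let m ≥ 1 and let v be uniformly distributed on {1/a : a ∈ {1,...,m}}. Then E[v] = H_m/m, where H_m = ∑_{a=1}^m 1/a is the m-th harmonic number. Consequently, for any price p > 0, the ratio (p·Pr[v ≥ p])/E[v] is at most 1/H_m, which tends to 0 as m → ∞. -/

import Mathlib

/-- For v uniform on {1/a : a ∈ {1,...,m}}, E[v] = H_m/m, the posted-price revenue-to-welfare
ratio is at most 1/H_m, and 1/H_m → 0 as m → ∞. -/
theorem stmt1 :
    (∀ m : ℕ, 1 ≤ m → ∀ H : ℝ, H = ∑ a ∈ Finset.Icc 1 m, (1 : ℝ) / a →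
      ((∑ a ∈ Finset.Icc 1 m, ((1 : ℝ) / m) * ((1 : ℝ) / a)) = H / m ∧
       ∀ p : ℝ, 0 < p →
         (p * (((Finset.Icc 1 m).filter (fun a : ℕ => p ≤ 1 / (a : ℝ))).card : ℝ) / m) / (H / m)
           ≤ 1 / H)) ∧
    Filter.Tendsto (fun m : ℕ => 1 / ∑ a ∈ Finset.Icc 1 m, (1 : ℝ) / a)
      Filter.atTop (nhds 0) := by
  constructor
  · intro m hm H hH
    have hm0 : (0 : ℝ) < m := by positivity
    have hHpos : 0 < H := by
      rw [hH]
      apply Finset.sum_pos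
      · intro a ha
        simp only [Finset.mem_Icc] at ha
        have : (0 : ℝ) < a := by exact_mod_cast Nat.lt_of_lt_of_le Nat.zero_lt_one ha.1
        positivity
      · exact ⟨1, by simp [hm]⟩
    constructor
    · rw [← Finset.mul_sum, ← hH]
      field_simp
    · intro p hp
      -- key: p * card ≤ 1
      have hcard : (((Finset.Icc 1 m).filter (fun a : ℕ => p ≤ 1 / (a : ℝ))).card : ℝ) ≤ 1 / p := by
        have hsub : (Finset.Icc 1 m).filter (fun a : ℕ => p ≤ 1 / (a : ℝ)) ⊆
            Finset.Icc 1 ⌊1 / p⌋₊ := by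
          intro a ha
          simp only [Finset.mem_filter, Finset.mem_Icc] at ha ⊢
          refine ⟨ha.1.1, Nat.le_floor ?_⟩
          have ha0 : (0 : ℝ) < a := by exact_mod_cast ha.1.1
          rw [le_div_iff₀ ha0] at ha
          rw [le_div_iff₀ hp]
          linarith [ha.2]
        calc (((Finset.Icc 1 m).filter (fun a : ℕ => p ≤ 1 / (a : ℝ))).card : ℝ)
            ≤ ((Finset.Icc 1 ⌊1 / p⌋₊).card : ℝ) := by
              exact_mod_cast Finset.card_le_card hsub
          _ ≤ (⌊1 / p⌋₊ : ℝ) := by simp [Nat.card_Icc]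
          _ ≤ 1 / p := Nat.floor_le (by positivity)
      have hkey : p * (((Finset.Icc 1 m).filter (fun a : ℕ => p ≤ 1 / (a : ℝ))).card : ℝ) ≤ 1 := by
        calc p * _ ≤ p * (1 / p) := by
              exact mul_le_mul_of_nonneg_left hcard hp.le
          _ = 1 := by field_simp
      have hsimp : (p * (((Finset.Icc 1 m).filter (fun a : ℕ => p ≤ 1 / (a : ℝ))).card : ℝ) / m) / (H / m)
          = p * (((Finset.Icc 1 m).filter (fun a : ℕ => p ≤ 1 / (a : ℝ))).card : ℝ) / H := by
        field_simp
      rw [hsimp]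
      gcongr
  · have h1 : Filter.Tendsto (fun m : ℕ => ∑ a ∈ Finset.Icc 1 m, (1 : ℝ) / a)
        Filter.atTop Filter.atTop := by
      have : (fun m : ℕ => ∑ a ∈ Finset.Icc 1 m, (1 : ℝ) / a)
          = fun m : ℕ => ∑ i ∈ Finset.range m, 1 / (i + 1 : ℝ) := by
        funext m
        rw [show Finset.Icc 1 m = Finset.Ico 1 (m+1) by rw [Finset.Ico_add_one_right_eq_Icc],
          Finset.sum_Ico_eq_sum_range]
        simp [add_comm]
      rw [this]
      exact Real.tendsto_sum_range_one_div_nat_succ_atTop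
    simpa [Pi.inv_def] using h1.inv_tendsto_atTop
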